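/- Let α, β ∈ ℂ with |α|² − |β|² = 1 and let γ(z) = (αz + β)/(conj(β)·z + conj(α)). Then for every z ∈ ℂ with |z| < 1 and every b ∈ ℂ with |b| = 1, the Poisson kernel satisfies the cocycle identity P(γ(z), γ(b)) = P(z, b) · P(γ(0), γ(b)). -/

import Mathlib

open Complex

/-- The Poisson kernel of the unit disc, `P(z,b) = (1 − |z|²)/|z − b|²`. -/
noncomputable def poissonKernelUnitDisc (z b : ℂ) : ℝ :=
  (1 - ‖z‖ ^ 2) / ‖z - b‖ ^ 2

lemma key_normSq (α β w : ℂ) :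
    normSq ((starRingEnd ℂ) β * w + (starRingEnd ℂ) α) - normSq (α * w + β) =
      (normSq α - normSq β) * (1 - normSq w) := by
  simp only [normSq_apply, add_re, add_im, mul_re, mul_im, conj_re, conj_im]
  ring

lemma pk_normSq (z b : ℂ) :
    poissonKernelUnitDisc z b = (1 - normSq z) / normSq (z - b) := by
  simp [poissonKernelUnitDisc, Complex.sq_norm]

theorem stmt4 (α β : ℂ) (h : ‖α‖ ^ 2 - ‖β‖ ^ 2 = 1)
    (z b : ℂ) (hz : ‖z‖ < 1) (hb : ‖b‖ = 1) :
    poissonKernelUnitDisc ((α * z + β) / ((starRingEnd ℂ) β * z + (starRingEnd ℂ) α))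
        ((α * b + β) / ((starRingEnd ℂ) β * b + (starRingEnd ℂ) α)) =
      poissonKernelUnitDisc z b *
        poissonKernelUnitDisc ((α * 0 + β) / ((starRingEnd ℂ) β * 0 + (starRingEnd ℂ) α))
          ((α * b + β) / ((starRingEnd ℂ) β * b + (starRingEnd ℂ) α)) := by
  rw [Complex.sq_norm, Complex.sq_norm] at h
  have habs : ∀ w : ℂ, ‖w‖ ≤ 1 → (starRingEnd ℂ) β * w + (starRingEnd ℂ) α ≠ 0 := by
    intro w hw h0
    have e : (starRingEnd ℂ) α = -((starRingEnd ℂ) β * w) := by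
      linear_combination h0
    have := congrArg norm e
    simp only [norm_neg, norm_mul, Complex.norm_conj] at this
    have h3 := norm_nonneg β
    have h5 : ‖α‖ ≤ ‖β‖ := by
      calc ‖α‖ = ‖β‖ * ‖w‖ := this
        _ ≤ ‖β‖ * 1 := mul_le_mul_of_nonneg_left hw h3
        _ = ‖β‖ := mul_one _
    nlinarith [Complex.sq_norm α, Complex.sq_norm β, norm_nonneg α]
  have hDz := habs z hz.le
  have hDb := habs b hb.le
  have hD0 := habs 0 (by simp)
  have hC : α * (starRingEnd ℂ) α - β * (starRingEnd ℂ) β = 1 := by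
    rw [Complex.mul_conj, Complex.mul_conj]
    exact_mod_cast congrArg (fun x : ℝ => (x : ℂ)) h
  have hsub : ∀ w : ℂ, (starRingEnd ℂ) β * w + (starRingEnd ℂ) α ≠ 0 →
      (α * w + β) / ((starRingEnd ℂ) β * w + (starRingEnd ℂ) α) -
        (α * b + β) / ((starRingEnd ℂ) β * b + (starRingEnd ℂ) α) =
      (w - b) / (((starRingEnd ℂ) β * w + (starRingEnd ℂ) α) *
        ((starRingEnd ℂ) β * b + (starRingEnd ℂ) α)) := by
    intro w hDw
    rw [div_sub_div _ _ hDw hDb]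
    congr 1
    linear_combination (w - b) * hC
  have hnum : ∀ w : ℂ, (starRingEnd ℂ) β * w + (starRingEnd ℂ) α ≠ 0 →
      1 - normSq ((α * w + β) / ((starRingEnd ℂ) β * w + (starRingEnd ℂ) α)) =
      (1 - normSq w) / normSq ((starRingEnd ℂ) β * w + (starRingEnd ℂ) α) := by
    intro w hDw
    have hn : normSq ((starRingEnd ℂ) β * w + (starRingEnd ℂ) α) ≠ 0 :=
      fun e => hDw (normSq_eq_zero.mp e)
    rw [normSq_div]
    rw [eq_div_iff hn, sub_mul, one_mul, div_mul_cancel₀ _ hn]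
    linear_combination key_normSq α β w + (1 - normSq w) * h
  have hnDz : normSq ((starRingEnd ℂ) β * z + (starRingEnd ℂ) α) ≠ 0 :=
    fun e => hDz (normSq_eq_zero.mp e)
  have hnDb : normSq ((starRingEnd ℂ) β * b + (starRingEnd ℂ) α) ≠ 0 :=
    fun e => hDb (normSq_eq_zero.mp e)
  have hzb : z ≠ b := fun e => by rw [e, hb] at hz; exact lt_irrefl 1 hz
  have hnzb : normSq (z - b) ≠ 0 := fun e => hzb (sub_eq_zero.mp (normSq_eq_zero.mp e))
  have hnb : normSq b = 1 := by rw [← Complex.sq_norm, hb]; norm_num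
  have hnα : normSq α ≠ 0 := by
    intro e
    nlinarith [normSq_nonneg β]
  have hnD0 : normSq ((starRingEnd ℂ) β * 0 + (starRingEnd ℂ) α) ≠ 0 :=
    fun e => hD0 (normSq_eq_zero.mp e)
  rw [pk_normSq, pk_normSq, pk_normSq, hsub z hDz, hsub 0 hD0,
    hnum z hDz, hnum 0 hD0, normSq_div, normSq_div, normSq_mul, normSq_mul]
  rw [show (0:ℂ) - b = -b by ring, normSq_neg, hnb]
  field_simp
  ring
  simp
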